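/- Let c, r, δ > 0, let y : ℝ → ℝ be continuous with r · y t ≤ c − δ for all t ≥ 0, and let w : ℝ → ℝ be differentiable with w 0 > 0 and ẇ t = w t · (−c + r · y t − w t) for all t ≥ 0. Then 0 < w t ≤ w 0 · Real.exp (−δ · t) for all t ≥ 0; in particular w t → 0 as t → ∞. -/

import Mathlib

open Set Real Filter

/-- Nonvanishing via backward Grönwall: the solution can't hit zero. -/
lemma wage_pos_aux (w : ℝ → ℝ) (hw : Differentiable ℝ w) (hw0 : 0 < w 0)
    (φ : ℝ → ℝ) (hφ : Continuous φ)
    (hweq : ∀ t : ℝ, 0 ≤ t → deriv w t = w t * φ t) :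
    ∀ T : ℝ, 0 ≤ T → 0 < w T := by
  have hne : ∀ T : ℝ, 0 ≤ T → w T ≠ 0 := by
    intro T hT hWT
    obtain ⟨C, hC⟩ := (isCompact_Icc (a := (0:ℝ)) (b := T)).exists_bound_of_continuousOn
      (hφ.continuousOn)
    set u : ℝ → ℝ := fun s => w (T - s) with hu
    have hud : ∀ s : ℝ, HasDerivAt u (deriv w (T - s) * (-1)) s := by
      intro s
      exact (hw.differentiableAt.hasDerivAt).comp s ((hasDerivAt_id s).const_sub T)
    have key : ∀ x ∈ Icc (0:ℝ) T, ‖u x‖ ≤ gronwallBound ‖u 0‖ C 0 (x - 0) := by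
      apply norm_le_gronwallBound_of_norm_deriv_right_le
        (f' := fun s => deriv w (T - s) * (-1))
      · exact ((hw.continuous.comp (continuous_const.sub continuous_id)).continuousOn)
      · exact fun x _ => (hud x).hasDerivWithinAt
      · exact le_refl _
      · intro x hx
        have hx1 : (0:ℝ) ≤ T - x := by linarith [hx.2]
        have hx2 : T - x ∈ Icc (0:ℝ) T := ⟨hx1, by linarith [hx.1]⟩
        have := hweq (T - x) hx1
        have hCb := hC (T - x) hx2
        simp only [Real.norm_eq_abs] at hCb ⊢
        rw [this]
        have : |w (T - x) * φ (T - x) * (-1)| = |φ (T - x)| * |w (T - x)| := by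
          rw [abs_mul, abs_mul]; simp [mul_comm]
        rw [this, add_zero]
        have h0 : (0:ℝ) ≤ |w (T - x)| := abs_nonneg _
        nlinarith [abs_nonneg (φ (T - x))]
    have hTm : T ∈ Icc (0:ℝ) T := ⟨hT, le_refl _⟩
    have h := key T hTm
    simp only [hu, sub_self, sub_zero, hWT, norm_zero, gronwallBound_ε0, zero_mul,
      Real.norm_eq_abs, abs_zero, mul_zero] at h
    rw [abs_of_pos hw0] at h
    linarith
  intro T hT
  rcases lt_trichotomy (w T) 0 with h | h | h
  · -- IVT gives a zero in [0, T], contradiction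
    obtain ⟨t, ht, hwt⟩ := intermediate_value_Icc' hT hw.continuous.continuousOn
      (⟨h.le, hw0.le⟩ : (0:ℝ) ∈ Icc (w T) (w 0))
    exact absurd hwt (hne t ht.1)
  · exact absurd h (hne T hT)
  · exact h

/-- In the scavenger equation `ẇ = w(−c + r y − w)`, if output stays so low
that `r y ≤ c − δ`, then the wage share stays positive, decays at least
exponentially, and tends to `0`. -/
theorem wage_share_damps_to_zero
    (c r δ : ℝ) (hc : 0 < c) (hr : 0 < r) (hδ : 0 < δ)
    (y : ℝ → ℝ) (hy : Continuous y) (hyb : ∀ t : ℝ, 0 ≤ t → r * y t ≤ c - δ)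
    (w : ℝ → ℝ) (hw : Differentiable ℝ w) (hw0 : 0 < w 0)
    (hw' : ∀ t : ℝ, 0 ≤ t → deriv w t = w t * (-c + r * y t - w t)) :
    (∀ t : ℝ, 0 ≤ t → 0 < w t ∧ w t ≤ w 0 * Real.exp (-δ * t)) ∧
    Filter.Tendsto w Filter.atTop (nhds 0) := by
  have hpos : ∀ t : ℝ, 0 ≤ t → 0 < w t :=
    wage_pos_aux w hw hw0 (fun t => -c + r * y t - w t)
      ((continuous_const.add (continuous_const.mul hy)).sub hw.continuous) hw'
  -- the auxiliary function g t = w t * exp (δ t) is antitone on [0, ∞)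
  set g : ℝ → ℝ := fun t => w t * Real.exp (δ * t) with hg
  have hgderiv : ∀ t : ℝ, HasDerivAt g
      (deriv w t * Real.exp (δ * t) + w t * (Real.exp (δ * t) * δ)) t := by
    intro t
    have h1 : HasDerivAt (fun t => Real.exp (δ * t)) (Real.exp (δ * t) * δ) t := by
      have := (Real.hasDerivAt_exp (δ * t)).comp t ((hasDerivAt_id t).const_mul δ)
      exact ((hasDerivAt_id t).const_mul δ).exp.congr_deriv (by simp)
    exact (hw.differentiableAt.hasDerivAt).mul h1
  have hganti : AntitoneOn g (Ici (0:ℝ)) := by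
    apply antitoneOn_of_deriv_nonpos (convex_Ici 0)
    · exact (Continuous.continuousOn (hw.continuous.mul (Real.continuous_exp.comp (continuous_const.mul continuous_id))))
    · intro x hx
      exact ((hgderiv x).differentiableAt).differentiableWithinAt
    · intro x hx
      rw [interior_Ici] at hx
      have hx0 : (0:ℝ) ≤ x := le_of_lt hx
      rw [(hgderiv x).deriv, hw' x hx0]
      have hwx := hpos x hx0
      have hyx := hyb x hx0
      have hex : 0 < Real.exp (δ * x) := Real.exp_pos _
      have key : -c + r * y x - w x + δ ≤ 0 := by linarith
      nlinarith [mul_nonneg (mul_pos hex hwx).le (neg_nonneg.mpr key)]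
  have hbound : ∀ t : ℝ, 0 ≤ t → w t ≤ w 0 * Real.exp (-δ * t) := by
    intro t ht
    have := hganti (self_mem_Ici) (mem_Ici.mpr ht) ht
    simp only [hg, mul_zero, Real.exp_zero, mul_one] at this
    have hex : 0 < Real.exp (δ * t) := Real.exp_pos _
    rw [neg_mul, Real.exp_neg, ← div_eq_mul_inv, le_div_iff₀ hex]
    exact this
  refine ⟨fun t ht => ⟨hpos t ht, hbound t ht⟩, ?_⟩
  have hupper : Tendsto (fun t => w 0 * Real.exp (-δ * t)) atTop (nhds 0) := by
    have h1 : Tendsto (fun t : ℝ => -δ * t) atTop atBot :=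
      tendsto_id.const_mul_atTop_of_neg (by linarith)
    have := (Real.tendsto_exp_atBot.comp h1).const_mul (w 0)
    simpa using this
  refine tendsto_of_tendsto_of_tendsto_of_le_of_le' tendsto_const_nhds hupper ?_ ?_
  · filter_upwards [eventually_ge_atTop (0:ℝ)] with t ht
    exact (hpos t ht).le
  · filter_upwards [eventually_ge_atTop (0:ℝ)] with t ht
    exact hbound t ht
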